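/- Energy decrease along the flow: in the setting of the continuous forward–backward flow ẋ(t) + x(t) = prox_{γf}(x(t) − γ∇g(x(t))) with f proper convex lsc, g convex with (1/β)-Lipschitz gradient and γ > 0, for almost every t ≥ 0 one has (d/dt)[(f+g)(ẋ(t)+x(t)) + (1/(2γ))‖ẋ(t)‖²] + [1/γ − (1/β)(3 + γ/β)]‖ẋ(t)‖² ≤ 0. In particular, if (γ/β)(3 + γ/β) ≤ 1, the function t ↦ (f+g)(ẋ(t)+x(t)) + (1/(2γ))‖ẋ(t)‖² is nonincreasing. -/

import Mathlib

open Filter MeasureTheory Set Topology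
open scoped RealInnerProductSpace

private lemma quad_aux {r w0 c : ℝ} (hr : 0 ≤ r) (hw : 0 ≤ w0) (hc : 0 ≤ c)
    (h : r ^ 2 ≤ (1 + c) * r * w0 + c * w0 ^ 2) : r ≤ (1 + 2 * c) * w0 := by
  by_contra hlt
  push_neg at hlt
  nlinarith [mul_nonneg hc hw, mul_nonneg (mul_nonneg hc hw) hw, mul_nonneg hc hr]

theorem antitone_core {E E' : ℝ → ℝ}
    (hlip : ∀ M : ℝ, 0 ≤ M → ∃ K : ℝ, 0 ≤ K ∧
      ∀ s ∈ Icc (0:ℝ) M, ∀ t ∈ Icc (0:ℝ) M, |E t - E s| ≤ K * |t - s|)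
    (hd : ∀ᵐ t ∂(volume.restrict (Ici (0:ℝ))), HasDerivAt E (E' t) t ∧ E' t ≤ 0) :
    AntitoneOn E (Ici 0) := by
  intro a ha b hb hab
  rcases eq_or_lt_of_le hab with rfl | hab'
  · exact le_rfl
  have ha0 : (0:ℝ) ≤ a := ha
  have hb0 : (0:ℝ) ≤ b := hb
  obtain ⟨K, hK0, hK⟩ := hlip (b + 1) (by linarith)
  have contE : ContinuousOn E (Icc 0 (b+1)) := by
    apply LipschitzOnWith.continuousOn (K := ⟨K, hK0⟩)
    apply LipschitzOnWith.of_dist_le_mul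
    intro s hs t ht
    rw [Real.dist_eq, Real.dist_eq]
    exact hK t ht s hs
  set h : ℕ → ℝ := fun n => 1 / (n + 1) with hh
  have hpos : ∀ n, 0 < h n := fun n => by positivity
  have hle1 : ∀ n, h n ≤ 1 := fun n => by
    rw [hh]; rw [div_le_one (by positivity)]; push_cast; linarith
  have htend : Tendsto h atTop (𝓝 0) := tendsto_one_div_add_atTop_nhds_zero_nat
  set q : ℕ → ℝ → ℝ := fun n t => (E (t + h n) - E t) / h n with hq
  -- integrability helper
  have hInt : ∀ c d : ℝ, c ∈ Icc (0:ℝ) (b+1) → d ∈ Icc (0:ℝ) (b+1) →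
      IntervalIntegrable E volume c d := by
    intro c d hc hd'
    apply ContinuousOn.intervalIntegrable
    apply contE.mono
    rw [uIcc_eq_union]
    exact union_subset (Icc_subset_Icc hc.1 hd'.2) (Icc_subset_Icc hd'.1 hc.2)
  have hmem : ∀ n, ∀ t ∈ Icc a b, t ∈ Icc (0:ℝ) (b+1) ∧ t + h n ∈ Icc (0:ℝ) (b+1) := by
    intro n t ht
    constructor
    · exact ⟨le_trans ha0 ht.1, by linarith [ht.2]⟩
    · constructor
      · linarith [ht.1, (hpos n).le]
      · linarith [ht.2, hle1 n]
  -- uniform bound on difference quotients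
  have hbound : ∀ n, ∀ t ∈ Icc a b, |q n t| ≤ K := by
    intro n t ht
    obtain ⟨h1, h2⟩ := hmem n t ht
    have : |E (t + h n) - E t| ≤ K * h n := by
      have := hK t h1 (t + h n) h2
      simpa [abs_of_nonneg (hpos n).le] using this
    rw [hq]
    rw [abs_div, abs_of_nonneg (hpos n).le, div_le_iff₀ (hpos n)]
    linarith [this]
  -- continuity of q n on Icc a b
  have hqcont : ∀ n, ContinuousOn (q n) (Icc a b) := by
    intro n
    apply ContinuousOn.div_const
    apply ContinuousOn.sub
    · apply ContinuousOn.comp contE ((continuous_add_right (h n)).continuousOn)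
      intro t ht; exact (hmem n t ht).2
    · exact contE.mono (fun t ht => (hmem n t ht).1)
  -- value of the integral of q n
  set S : ℕ → ℝ := fun n => ∫ t in a..b, q n t with hS
  have hSval : ∀ n, S n = ((∫ t in b..(b + h n), E t) - ∫ t in a..(a + h n), E t) / h n := by
    intro n
    have hIa : a ∈ Icc (0:ℝ) (b+1) := ⟨ha0, by linarith⟩
    have hIb : b ∈ Icc (0:ℝ) (b+1) := ⟨hb0, by linarith⟩
    have hIah : a + h n ∈ Icc (0:ℝ) (b+1) := ⟨by linarith [(hpos n).le], by linarith [hle1 n]⟩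
    have hIbh : b + h n ∈ Icc (0:ℝ) (b+1) := ⟨by linarith [(hpos n).le], by linarith [hle1 n]⟩
    have e1 : (∫ t in a..b, E (t + h n)) = ∫ t in (a + h n)..(b + h n), E t :=
      intervalIntegral.integral_comp_add_right (fun t => E t) (h n)
    have i1 : IntervalIntegrable (fun t => E (t + h n)) volume a b := by
      apply ContinuousOn.intervalIntegrable
      rw [uIcc_of_le hab]
      apply ContinuousOn.comp contE ((continuous_add_right (h n)).continuousOn)
      intro t ht; exact (hmem n t ht).2
    have i2 : IntervalIntegrable E volume a b := hInt a b hIa hIb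
    have add1 : (∫ t in a..(a + h n), E t) + (∫ t in (a + h n)..(b + h n), E t)
        = ∫ t in a..(b + h n), E t :=
      intervalIntegral.integral_add_adjacent_intervals (hInt _ _ hIa hIah) (hInt _ _ hIah hIbh)
    have add2 : (∫ t in a..b, E t) + (∫ t in b..(b + h n), E t) = ∫ t in a..(b + h n), E t :=
      intervalIntegral.integral_add_adjacent_intervals i2 (hInt _ _ hIb hIbh)
    have e2 : S n = ((∫ t in a..b, E (t + h n)) - ∫ t in a..b, E t) / h n := by
      rw [← intervalIntegral.integral_sub i1 i2, ← intervalIntegral.integral_div]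
    rw [e2, e1]
    congr 1
    linarith [add1, add2]
  -- boundary limit
  have hbdry : ∀ c : ℝ, c ∈ Icc (0:ℝ) b →
      Tendsto (fun n => (∫ t in c..(c + h n), E t) / h n) atTop (𝓝 (E c)) := by
    intro c hc
    have hIc : c ∈ Icc (0:ℝ) (b+1) := ⟨hc.1, by linarith [hc.2]⟩
    have key : ∀ n, |(∫ t in c..(c + h n), E t) / h n - E c| ≤ K * h n := by
      intro n
      have hIch : c + h n ∈ Icc (0:ℝ) (b+1) :=
        ⟨by linarith [hc.1, (hpos n).le], by linarith [hc.2, hle1 n]⟩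
      have iE : IntervalIntegrable E volume c (c + h n) := hInt _ _ hIc hIch
      have iC : IntervalIntegrable (fun _ : ℝ => E c) volume c (c + h n) :=
        intervalIntegrable_const
      have e3 : (∫ t in c..(c + h n), E t - E c)
          = (∫ t in c..(c + h n), E t) - h n * E c := by
        rw [intervalIntegral.integral_sub iE iC, intervalIntegral.integral_const]
        rw [smul_eq_mul]
        ring
      have bnd : ∀ t ∈ Set.uIoc c (c + h n), ‖E t - E c‖ ≤ K * h n := by
        intro t ht
        rw [uIoc_of_le (by linarith [(hpos n).le])] at ht
        have htI : t ∈ Icc (0:ℝ) (b+1) := ⟨by linarith [hIc.1, ht.1.le], by linarith [ht.2, hIch.2]⟩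
        have := hK c hIc t htI
        have habs : |t - c| ≤ h n := by
          rw [abs_of_nonneg (by linarith [ht.1.le])]
          linarith [ht.2]
        calc ‖E t - E c‖ = |E t - E c| := rfl
          _ ≤ K * |t - c| := this
          _ ≤ K * h n := by apply mul_le_mul_of_nonneg_left habs hK0
      have := intervalIntegral.norm_integral_le_of_norm_le_const bnd
      rw [e3] at this
      have hd' : |c + h n - c| = h n := by rw [abs_of_nonneg (by linarith [(hpos n).le])]; ring_nf
      rw [hd'] at this
      have expand : (∫ t in c..(c + h n), E t) / h n - E c
          = ((∫ t in c..(c + h n), E t) - h n * E c) / h n := by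
        rw [sub_div, mul_div_cancel_left₀ _ (hpos n).ne']
      rw [expand, abs_div, abs_of_nonneg (hpos n).le, div_le_iff₀ (hpos n)]
      calc |(∫ t in c..(c + h n), E t) - h n * E c| ≤ K * h n * h n := this
        _ = K * h n * h n := rfl
    have h0 : Tendsto (fun n => K * h n) atTop (𝓝 0) := by
      have h0' : Tendsto (fun n => K * h n) atTop (𝓝 (K * 0)) := htend.const_mul K
      rwa [mul_zero] at h0'
    have : Tendsto (fun n => (∫ t in c..(c + h n), E t) / h n - E c) atTop (𝓝 0) :=
      squeeze_zero_norm key h0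
    have := this.add_const (E c)
    simpa using this
  -- limit A
  have hlimA : Tendsto S atTop (𝓝 (E b - E a)) := by
    have h1 := hbdry b ⟨hb0, le_rfl⟩
    have h2 := hbdry a ⟨ha0, hab⟩
    have := h1.sub h2
    apply this.congr
    intro n
    rw [hSval n, sub_div]
  -- limit C : dominated convergence
  have hlimC : Tendsto S atTop (𝓝 (∫ t in Ioc a b, E' t)) := by
    have hSeq : ∀ n, S n = ∫ t in Ioc a b, q n t := fun n =>
      intervalIntegral.integral_of_le hab
    have key : Tendsto (fun n => ∫ t in Ioc a b, q n t) atTop (𝓝 (∫ t in Ioc a b, E' t)) := by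
      apply tendsto_integral_of_dominated_convergence (bound := fun _ => K)
      · intro n
        exact ((hqcont n).mono Ioc_subset_Icc_self).aestronglyMeasurable measurableSet_Ioc
      · rw [integrable_const_iff]
        right
        infer_instance
      · intro n
        rw [ae_restrict_iff' measurableSet_Ioc]
        apply Eventually.of_forall
        intro t ht
        exact hbound n t (Ioc_subset_Icc_self ht)
      · have hd2 : ∀ᵐ t ∂(volume.restrict (Ioc a b)), HasDerivAt E (E' t) t ∧ E' t ≤ 0 :=
          ae_restrict_of_ae_restrict_of_subset ((fun t ht => show t ∈ Ici (0:ℝ) from le_trans (by linarith) ht.1.le)) hd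
        filter_upwards [hd2] with t ht
        have hslope := ht.1.tendsto_slope_zero
        have hcomp : Tendsto h atTop (𝓝[≠] (0:ℝ)) := by
          rw [tendsto_nhdsWithin_iff]
          exact ⟨htend, Eventually.of_forall fun n => (hpos n).ne'⟩
        have := hslope.comp hcomp
        apply this.congr
        intro n
        simp [hq, smul_eq_mul, div_eq_inv_mul]
    exact key.congr (fun n => (hSeq n).symm)
  -- conclude
  have heq : E b - E a = ∫ t in Ioc a b, E' t := tendsto_nhds_unique hlimA hlimC
  have hneg : (∫ t in Ioc a b, E' t) ≤ 0 := by
    apply integral_nonpos_of_ae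
    have hd2 : ∀ᵐ t ∂(volume.restrict (Ioc a b)), HasDerivAt E (E' t) t ∧ E' t ≤ 0 :=
      ae_restrict_of_ae_restrict_of_subset ((fun t ht => show t ∈ Ici (0:ℝ) from le_trans (by linarith) ht.1.le)) hd
    filter_upwards [hd2] with t ht
    exact ht.2
  linarith

set_option maxHeartbeats 1000000 in
theorem stmt13
    {H : Type*} [NormedAddCommGroup H] [InnerProductSpace ℝ H] [CompleteSpace H]
    (f : H → ℝ) (hf_cvx : ConvexOn ℝ Set.univ f) (hf_lsc : LowerSemicontinuous f)
    (g : H → ℝ) (g' : H → H)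
    (hg_diff : ∀ z : H, HasGradientAt g (g' z) z)
    (hg_cvx : ∀ a b : H, g a + ⟪g' a, b - a⟫ ≤ g b)
    (β : ℝ) (hβ : 0 < β)
    (hg_lip : ∀ a b : H, ‖g' a - g' b‖ ≤ (1/β) * ‖a - b‖)
    (γ : ℝ) (hγ : 0 < γ)
    (x xd xdd : ℝ → H)
    (hx : ∀ t ≥ (0:ℝ), HasDerivAt x (xd t) t)
    (hprox : ∀ t ≥ (0:ℝ), ∀ y : H,
      f (xd t + x t) + ⟪-((1/γ) • xd t) - g' (x t), y - (xd t + x t)⟫ ≤ f y)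
    (hxdd : ∀ᵐ t ∂(volume.restrict (Ici (0:ℝ))),
      HasDerivAt xd (xdd t) t ∧ ‖xdd t‖ ≤ (2 + γ/β) * ‖xd t‖)
    (hchain_f : ∀ᵐ t ∂(volume.restrict (Ici (0:ℝ))),
      HasDerivAt (fun s => f (xd s + x s))
        ⟪-((1/γ) • xd t) - g' (x t), xdd t + xd t⟫ t) :
    (∀ᵐ t ∂(volume.restrict (Ici (0:ℝ))),
      ∀ D : ℝ,
        HasDerivAt (fun s => f (xd s + x s) + g (xd s + x s) +
          (1/(2*γ)) * ‖xd s‖ ^ 2) D t →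
        D + (1/γ - (1/β) * (3 + γ/β)) * ‖xd t‖ ^ 2 ≤ 0) ∧
    ((γ/β) * (3 + γ/β) ≤ 1 →
      AntitoneOn (fun t => f (xd t + x t) + g (xd t + x t) +
        (1/(2*γ)) * ‖xd t‖ ^ 2) (Ici 0)) := by
  -- the common a.e. derivative statement
  have hAE : ∀ᵐ t ∂(volume.restrict (Ici (0:ℝ))),
      HasDerivAt (fun s => f (xd s + x s) + g (xd s + x s) + (1/(2*γ)) * ‖xd s‖ ^ 2)
        (⟪g' (xd t + x t) - g' (x t), xdd t + xd t⟫ - (1/γ) * ‖xd t‖ ^ 2) t ∧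
      ⟪g' (xd t + x t) - g' (x t), xdd t + xd t⟫ ≤ (1/β) * (3 + γ/β) * ‖xd t‖ ^ 2 := by
    filter_upwards [hxdd, hchain_f, ae_restrict_mem measurableSet_Ici] with t htdd hcf ht
    obtain ⟨hdd, hddb⟩ := htdd
    have hz : HasDerivAt (fun s => xd s + x s) (xdd t + xd t) t := hdd.add (hx t ht)
    have hgc : HasDerivAt (fun s => g (xd s + x s)) ⟪g' (xd t + x t), xdd t + xd t⟫ t := by
      have h1 := (hg_diff (xd t + x t)).hasFDerivAt.comp_hasDerivAt t hz
      simp at h1; exact h1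
    have hsq : HasDerivAt (fun s => (1/(2*γ)) * ‖xd s‖ ^ 2)
        ((1/(2*γ)) * (⟪xd t, xdd t⟫ + ⟪xdd t, xd t⟫)) t := by
      have hi : HasDerivAt (fun s => ⟪xd s, xd s⟫) (⟪xd t, xdd t⟫ + ⟪xdd t, xd t⟫) t :=
        hdd.inner ℝ hdd
      have h2 := hi.const_mul (1/(2*γ))
      have funeq : (fun s => (1/(2*γ)) * ‖xd s‖ ^ 2)
          = (fun s => (1/(2*γ)) * ⟪xd s, xd s⟫) := by
        funext s; rw [real_inner_self_eq_norm_sq]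
      rw [funeq]
      exact h2
    have hE0 := (hcf.add hgc).add hsq
    have hval : ⟪-((1/γ) • xd t) - g' (x t), xdd t + xd t⟫
          + ⟪g' (xd t + x t), xdd t + xd t⟫
          + (1/(2*γ)) * (⟪xd t, xdd t⟫ + ⟪xdd t, xd t⟫)
        = ⟪g' (xd t + x t) - g' (x t), xdd t + xd t⟫ - (1/γ) * ‖xd t‖ ^ 2 := by
      simp only [inner_sub_left, inner_neg_left, real_inner_smul_left, inner_add_right]
      rw [real_inner_comm (xd t) (xdd t), real_inner_self_eq_norm_sq]
      field_simp
      ring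
    rw [hval] at hE0
    refine ⟨hE0, ?_⟩
    -- key inequality
    have hwb : ‖xdd t + xd t‖ ≤ (3 + γ/β) * ‖xd t‖ := by
      calc ‖xdd t + xd t‖ ≤ ‖xdd t‖ + ‖xd t‖ := norm_add_le _ _
        _ ≤ (2 + γ/β) * ‖xd t‖ + ‖xd t‖ := by linarith
        _ = (3 + γ/β) * ‖xd t‖ := by ring
    have hqb : ‖g' (xd t + x t) - g' (x t)‖ ≤ (1/β) * ‖xd t‖ := by
      have h3 := hg_lip (xd t + x t) (x t)
      simpa [add_sub_cancel_right] using h3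
    calc ⟪g' (xd t + x t) - g' (x t), xdd t + xd t⟫
        ≤ ‖g' (xd t + x t) - g' (x t)‖ * ‖xdd t + xd t‖ := real_inner_le_norm _ _
      _ ≤ ((1/β) * ‖xd t‖) * ((3 + γ/β) * ‖xd t‖) := by
          apply mul_le_mul hqb hwb (norm_nonneg _) (by positivity)
      _ = (1/β) * (3 + γ/β) * ‖xd t‖ ^ 2 := by ring
  constructor
  · -- part 1
    filter_upwards [hAE] with t hAEt
    obtain ⟨hE, hkey⟩ := hAEt
    intro D hD
    have hDeq : D = ⟪g' (xd t + x t) - g' (x t), xdd t + xd t⟫ - (1/γ) * ‖xd t‖ ^ 2 :=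
      hD.unique hE
    rw [hDeq]
    nlinarith [hkey]
  · -- part 2
    intro hsmall
    have hcoeff : (1/β) * (3 + γ/β) ≤ 1/γ := by
      have h1 := mul_le_mul_of_nonneg_left hsmall (le_of_lt (one_div_pos.mpr hγ))
      calc (1/β) * (3 + γ/β) = (1/γ) * ((γ/β) * (3 + γ/β)) := by field_simp
        _ ≤ (1/γ) * 1 := h1
        _ = 1/γ := mul_one _
    -- continuity facts
    have hg'cont : Continuous g' := by
      have hlw : LipschitzWith (Real.toNNReal (1/β)) g' := by
        apply LipschitzWith.of_dist_le_mul
        intro a b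
        rw [dist_eq_norm, dist_eq_norm]
        calc ‖g' a - g' b‖ ≤ (1/β) * ‖a - b‖ := hg_lip a b
          _ = (Real.toNNReal (1/β) : ℝ) * ‖a - b‖ := by
              rw [Real.coe_toNNReal _ (by positivity)]
      exact hlw.continuous
    have hxcont : ContinuousOn x (Ici 0) := fun t ht =>
      ((hx t ht).continuousAt).continuousWithinAt
    -- monotonicity of the subdifferential along the flow
    have hmono : ∀ t s : ℝ, 0 ≤ t → 0 ≤ s →
        0 ≤ ⟪(-((1/γ) • xd t) - g' (x t)) - (-((1/γ) • xd s) - g' (x s)),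
            (xd t + x t) - (xd s + x s)⟫ := by
      intro t s ht hs
      have h1 := hprox t ht (xd s + x s)
      have h2 := hprox s hs (xd t + x t)
      have e1 : (xd s + x s) - (xd t + x t) = -((xd t + x t) - (xd s + x s)) := by abel
      rw [e1, inner_neg_right] at h1
      rw [inner_sub_left]
      linarith
    -- relative Lipschitz bound for xd in terms of x
    have hxdrel : ∀ t s : ℝ, 0 ≤ t → 0 ≤ s →
        ‖xd t - xd s‖ ≤ (1 + 2 * (γ/β)) * ‖x t - x s‖ := by
      intro t s ht hs
      set u := xd t - xd s with hu
      set w := x t - x s with hw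
      set q := g' (x t) - g' (x s) with hq
      have h0 := hmono t s ht hs
      have hvdiff : (-((1/γ) • xd t) - g' (x t)) - (-((1/γ) • xd s) - g' (x s))
          = -((1/γ) • u) - q := by
        rw [hu, hq, smul_sub]; abel
      have hzdiff : (xd t + x t) - (xd s + x s) = u + w := by rw [hu, hw]; abel
      rw [hvdiff, hzdiff] at h0
      have hexp : ⟪-((1/γ) • u) - q, u + w⟫
          = -((1/γ) * (⟪u, u⟫ + ⟪u, w⟫)) - ⟪q, u + w⟫ := by
        simp only [inner_sub_left, inner_neg_left, real_inner_smul_left, inner_add_right]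
        ring
      rw [hexp] at h0
      have hqb : ‖q‖ ≤ (1/β) * ‖w‖ := hg_lip (x t) (x s)
      have l1 : -⟪q, u + w⟫ ≤ ‖q‖ * ‖u + w‖ :=
        (neg_le_abs _).trans (abs_real_inner_le_norm q (u + w))
      have l2 : ‖q‖ * ‖u + w‖ ≤ ((1/β) * ‖w‖) * (‖u‖ + ‖w‖) :=
        mul_le_mul hqb (norm_add_le u w) (norm_nonneg _) (by positivity)
      have l3 : ‖u‖ ^ 2 - ‖u‖ * ‖w‖ ≤ ⟪u, u⟫ + ⟪u, w⟫ := by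
        rw [real_inner_self_eq_norm_sq]
        have := neg_abs_le ⟪u, w⟫
        have h4 := abs_real_inner_le_norm u w
        linarith
      have step1 : (1/γ) * (‖u‖ ^ 2 - ‖u‖ * ‖w‖) ≤ (1/β) * ‖w‖ * (‖u‖ + ‖w‖) := by
        calc (1/γ) * (‖u‖ ^ 2 - ‖u‖ * ‖w‖) ≤ (1/γ) * (⟪u, u⟫ + ⟪u, w⟫) :=
              mul_le_mul_of_nonneg_left l3 (by positivity)
          _ ≤ -⟪q, u + w⟫ := by linarith
          _ ≤ ‖q‖ * ‖u + w‖ := l1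
          _ ≤ (1/β) * ‖w‖ * (‖u‖ + ‖w‖) := l2
      have step2 : ‖u‖ ^ 2 - ‖u‖ * ‖w‖ ≤ (γ/β) * ‖w‖ * (‖u‖ + ‖w‖) := by
        have h5 := mul_le_mul_of_nonneg_left step1 hγ.le
        have e2 : γ * ((1/γ) * (‖u‖ ^ 2 - ‖u‖ * ‖w‖)) = ‖u‖ ^ 2 - ‖u‖ * ‖w‖ := by
          field_simp
        have e3 : γ * ((1/β) * ‖w‖ * (‖u‖ + ‖w‖)) = (γ/β) * ‖w‖ * (‖u‖ + ‖w‖) := by ring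
        linarith [h5, e2.symm.le, e3.le]
      apply quad_aux (norm_nonneg u) (norm_nonneg w) (by positivity)
      nlinarith [step2]
    -- the local Lipschitz property of the energy
    have hlip : ∀ M : ℝ, 0 ≤ M → ∃ K : ℝ, 0 ≤ K ∧
        ∀ s ∈ Icc (0:ℝ) M, ∀ t ∈ Icc (0:ℝ) M,
          |(f (xd t + x t) + g (xd t + x t) + (1/(2*γ)) * ‖xd t‖ ^ 2)
            - (f (xd s + x s) + g (xd s + x s) + (1/(2*γ)) * ‖xd s‖ ^ 2)| ≤ K * |t - s| := by
      intro M hM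
      have hIccsub : Icc (0:ℝ) M ⊆ Ici 0 := fun t ht => ht.1
      -- continuity of xd on [0, ∞)
      have hxdcont : ContinuousOn xd (Ici 0) := by
        intro t ht
        have hxc : ContinuousWithinAt x (Ici 0) t := hxcont t ht
        rw [Metric.continuousWithinAt_iff] at hxc ⊢
        intro ε hε
        have hL : (0:ℝ) < 1 + 2 * (γ/β) := by positivity
        obtain ⟨δ, hδ, hδ'⟩ := hxc (ε / (1 + 2 * (γ/β))) (by positivity)
        refine ⟨δ, hδ, ?_⟩
        intro s hs hds
        have h1 : ‖xd s - xd t‖ ≤ (1 + 2 * (γ/β)) * ‖x s - x t‖ := hxdrel s t hs ht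
        have h2 := hδ' hs hds
        rw [dist_eq_norm] at h2 ⊢
        calc ‖xd s - xd t‖ ≤ (1 + 2 * (γ/β)) * ‖x s - x t‖ := h1
          _ < (1 + 2 * (γ/β)) * (ε / (1 + 2 * (γ/β))) := by
              exact mul_lt_mul_of_pos_left h2 hL
          _ = ε := by field_simp
      have hcomp : IsCompact (Icc (0:ℝ) M) := isCompact_Icc
      obtain ⟨C0, hC0⟩ := hcomp.exists_bound_of_continuousOn (hxdcont.mono hIccsub)
      set C1 := max C0 0 with hC1def
      have hC1 : (0:ℝ) ≤ C1 := le_max_right _ _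
      have hC1b : ∀ t ∈ Icc (0:ℝ) M, ‖xd t‖ ≤ C1 := fun t ht =>
        (hC0 t ht).trans (le_max_left _ _)
      -- x is Lipschitz on [0, M]
      have hxlip : ∀ s ∈ Icc (0:ℝ) M, ∀ t ∈ Icc (0:ℝ) M, ‖x t - x s‖ ≤ C1 * |t - s| := by
        intro s hs t ht
        have h6 := (convex_Icc (0:ℝ) M).norm_image_sub_le_of_norm_hasDerivWithin_le
          (f := x) (f' := xd) (fun u hu => (hx u hu.1).hasDerivWithinAt)
          (fun u hu => hC1b u hu) hs ht
        simpa [Real.norm_eq_abs] using h6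
      have hxdlip : ∀ s ∈ Icc (0:ℝ) M, ∀ t ∈ Icc (0:ℝ) M,
          ‖xd t - xd s‖ ≤ ((1 + 2 * (γ/β)) * C1) * |t - s| := by
        intro s hs t ht
        calc ‖xd t - xd s‖ ≤ (1 + 2 * (γ/β)) * ‖x t - x s‖ := hxdrel t s ht.1 hs.1
          _ ≤ (1 + 2 * (γ/β)) * (C1 * |t - s|) := by
              apply mul_le_mul_of_nonneg_left (hxlip s hs t ht) (by positivity)
          _ = ((1 + 2 * (γ/β)) * C1) * |t - s| := by ring
      set Cz : ℝ := C1 + (1 + 2 * (γ/β)) * C1 with hCzdef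
      have hCz : (0:ℝ) ≤ Cz := by positivity
      have hzlip : ∀ s ∈ Icc (0:ℝ) M, ∀ t ∈ Icc (0:ℝ) M,
          ‖(xd t + x t) - (xd s + x s)‖ ≤ Cz * |t - s| := by
        intro s hs t ht
        have e7 : (xd t + x t) - (xd s + x s) = (xd t - xd s) + (x t - x s) := by abel
        rw [e7]
        calc ‖(xd t - xd s) + (x t - x s)‖ ≤ ‖xd t - xd s‖ + ‖x t - x s‖ := norm_add_le _ _
          _ ≤ ((1 + 2 * (γ/β)) * C1) * |t - s| + C1 * |t - s| := by
              linarith [hxdlip s hs t ht, hxlip s hs t ht]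
          _ = Cz * |t - s| := by rw [hCzdef]; ring
      -- bounds for v and g' ∘ z on [0, M]
      have hvcont : ContinuousOn (fun t => -((1/γ) • xd t) - g' (x t)) (Icc 0 M) := by
        apply ContinuousOn.sub
        · exact ((hxdcont.mono hIccsub).const_smul _).neg
        · exact hg'cont.comp_continuousOn (hxcont.mono hIccsub)
      obtain ⟨B0, hB0⟩ := hcomp.exists_bound_of_continuousOn hvcont
      set Bv := max B0 0 with hBvdef
      have hBv : (0:ℝ) ≤ Bv := le_max_right _ _
      have hBvb : ∀ t ∈ Icc (0:ℝ) M, ‖-((1/γ) • xd t) - g' (x t)‖ ≤ Bv := fun t ht =>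
        (hB0 t ht).trans (le_max_left _ _)
      have hgzcont : ContinuousOn (fun t => g' (xd t + x t)) (Icc 0 M) :=
        hg'cont.comp_continuousOn ((hxdcont.mono hIccsub).add (hxcont.mono hIccsub))
      obtain ⟨B1, hB1⟩ := hcomp.exists_bound_of_continuousOn hgzcont
      set Bg := max B1 0 with hBgdef
      have hBg : (0:ℝ) ≤ Bg := le_max_right _ _
      have hBgb : ∀ t ∈ Icc (0:ℝ) M, ‖g' (xd t + x t)‖ ≤ Bg := fun t ht =>
        (hB1 t ht).trans (le_max_left _ _)
      -- piecewise Lipschitz estimates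
      have hfpiece : ∀ s ∈ Icc (0:ℝ) M, ∀ t ∈ Icc (0:ℝ) M,
          |f (xd t + x t) - f (xd s + x s)| ≤ (Bv * Cz) * |t - s| := by
        intro s hs t ht
        rw [abs_sub_le_iff]
        constructor
        · have h7 := hprox t ht.1 (xd s + x s)
          have h8 : -⟪-((1/γ) • xd t) - g' (x t), (xd s + x s) - (xd t + x t)⟫
              ≤ Bv * (Cz * |t - s|) := by
            have h9 := (neg_le_abs _).trans
              (abs_real_inner_le_norm (-((1/γ) • xd t) - g' (x t)) ((xd s + x s) - (xd t + x t)))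
            have h10 : ‖(xd s + x s) - (xd t + x t)‖ ≤ Cz * |t - s| := by
              have := hzlip t ht s hs
              rwa [abs_sub_comm] at this
            calc -⟪-((1/γ) • xd t) - g' (x t), (xd s + x s) - (xd t + x t)⟫
                ≤ ‖-((1/γ) • xd t) - g' (x t)‖ * ‖(xd s + x s) - (xd t + x t)‖ := h9
              _ ≤ Bv * (Cz * |t - s|) :=
                  mul_le_mul (hBvb t ht) h10 (norm_nonneg _) hBv
          have h16 : f (xd t + x t) - f (xd s + x s)
              ≤ -⟪-((1/γ) • xd t) - g' (x t), (xd s + x s) - (xd t + x t)⟫ := by linarith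
          calc f (xd t + x t) - f (xd s + x s)
              ≤ -⟪-((1/γ) • xd t) - g' (x t), (xd s + x s) - (xd t + x t)⟫ := h16
            _ ≤ Bv * (Cz * |t - s|) := h8
            _ = Bv * Cz * |t - s| := by ring
        · have h7 := hprox s hs.1 (xd t + x t)
          have h8 : -⟪-((1/γ) • xd s) - g' (x s), (xd t + x t) - (xd s + x s)⟫
              ≤ Bv * (Cz * |t - s|) := by
            have h9 := (neg_le_abs _).trans
              (abs_real_inner_le_norm (-((1/γ) • xd s) - g' (x s)) ((xd t + x t) - (xd s + x s)))
            calc -⟪-((1/γ) • xd s) - g' (x s), (xd t + x t) - (xd s + x s)⟫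
                ≤ ‖-((1/γ) • xd s) - g' (x s)‖ * ‖(xd t + x t) - (xd s + x s)‖ := h9
              _ ≤ Bv * (Cz * |t - s|) :=
                  mul_le_mul (hBvb s hs) (hzlip s hs t ht) (norm_nonneg _) hBv
          have h16 : f (xd s + x s) - f (xd t + x t)
              ≤ -⟪-((1/γ) • xd s) - g' (x s), (xd t + x t) - (xd s + x s)⟫ := by linarith
          calc f (xd s + x s) - f (xd t + x t)
              ≤ -⟪-((1/γ) • xd s) - g' (x s), (xd t + x t) - (xd s + x s)⟫ := h16
            _ ≤ Bv * (Cz * |t - s|) := h8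
            _ = Bv * Cz * |t - s| := by ring
      have hgpiece : ∀ s ∈ Icc (0:ℝ) M, ∀ t ∈ Icc (0:ℝ) M,
          |g (xd t + x t) - g (xd s + x s)| ≤ (Bg * Cz) * |t - s| := by
        intro s hs t ht
        rw [abs_sub_le_iff]
        constructor
        · have h7 := hg_cvx (xd t + x t) (xd s + x s)
          have h9 := (neg_le_abs _).trans
            (abs_real_inner_le_norm (g' (xd t + x t)) ((xd s + x s) - (xd t + x t)))
          have h10 : ‖(xd s + x s) - (xd t + x t)‖ ≤ Cz * |t - s| := by
            have := hzlip t ht s hs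
            rwa [abs_sub_comm] at this
          have h11 : ‖g' (xd t + x t)‖ * ‖(xd s + x s) - (xd t + x t)‖ ≤ Bg * (Cz * |t - s|) :=
            mul_le_mul (hBgb t ht) h10 (norm_nonneg _) hBg
          calc g (xd t + x t) - g (xd s + x s)
              ≤ -⟪g' (xd t + x t), (xd s + x s) - (xd t + x t)⟫ := by linarith
            _ ≤ ‖g' (xd t + x t)‖ * ‖(xd s + x s) - (xd t + x t)‖ := h9
            _ ≤ Bg * (Cz * |t - s|) := h11
            _ = Bg * Cz * |t - s| := by ring
        · have h7 := hg_cvx (xd s + x s) (xd t + x t)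
          have h9 := (neg_le_abs _).trans
            (abs_real_inner_le_norm (g' (xd s + x s)) ((xd t + x t) - (xd s + x s)))
          have h11 : ‖g' (xd s + x s)‖ * ‖(xd t + x t) - (xd s + x s)‖ ≤ Bg * (Cz * |t - s|) :=
            mul_le_mul (hBgb s hs) (hzlip s hs t ht) (norm_nonneg _) hBg
          calc g (xd s + x s) - g (xd t + x t)
              ≤ -⟪g' (xd s + x s), (xd t + x t) - (xd s + x s)⟫ := by linarith
            _ ≤ ‖g' (xd s + x s)‖ * ‖(xd t + x t) - (xd s + x s)‖ := h9
            _ ≤ Bg * (Cz * |t - s|) := h11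
            _ = Bg * Cz * |t - s| := by ring
      have hnpiece : ∀ s ∈ Icc (0:ℝ) M, ∀ t ∈ Icc (0:ℝ) M,
          |(1/(2*γ)) * ‖xd t‖ ^ 2 - (1/(2*γ)) * ‖xd s‖ ^ 2|
            ≤ ((1/(2*γ)) * (2 * C1 * ((1 + 2 * (γ/β)) * C1))) * |t - s| := by
        intro s hs t ht
        have e8 : (1/(2*γ)) * ‖xd t‖ ^ 2 - (1/(2*γ)) * ‖xd s‖ ^ 2
            = (1/(2*γ)) * (‖xd t‖ ^ 2 - ‖xd s‖ ^ 2) := by ring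
        rw [e8, abs_mul, abs_of_pos (show (0:ℝ) < 1/(2*γ) by positivity)]
        have h12 : |‖xd t‖ ^ 2 - ‖xd s‖ ^ 2| ≤ 2 * C1 * ((1 + 2 * (γ/β)) * C1 * |t - s|) := by
          have e9 : ‖xd t‖ ^ 2 - ‖xd s‖ ^ 2 = (‖xd t‖ - ‖xd s‖) * (‖xd t‖ + ‖xd s‖) := by ring
          rw [e9, abs_mul]
          have h13 : |‖xd t‖ - ‖xd s‖| ≤ ‖xd t - xd s‖ := abs_norm_sub_norm_le _ _
          have h14 : |‖xd t‖ + ‖xd s‖| ≤ 2 * C1 := by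
            rw [abs_of_nonneg (by positivity)]
            linarith [hC1b t ht, hC1b s hs]
          calc |‖xd t‖ - ‖xd s‖| * |‖xd t‖ + ‖xd s‖|
              ≤ ‖xd t - xd s‖ * (2 * C1) :=
                mul_le_mul h13 h14 (abs_nonneg _) (norm_nonneg _)
            _ ≤ ((1 + 2 * (γ/β)) * C1 * |t - s|) * (2 * C1) := by
                apply mul_le_mul_of_nonneg_right (hxdlip s hs t ht) (by positivity)
            _ = 2 * C1 * ((1 + 2 * (γ/β)) * C1 * |t - s|) := by ring
        calc (1/(2*γ)) * |‖xd t‖ ^ 2 - ‖xd s‖ ^ 2|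
            ≤ (1/(2*γ)) * (2 * C1 * ((1 + 2 * (γ/β)) * C1 * |t - s|)) := by
              apply mul_le_mul_of_nonneg_left h12 (by positivity)
          _ = ((1/(2*γ)) * (2 * C1 * ((1 + 2 * (γ/β)) * C1))) * |t - s| := by ring
      refine ⟨Bv * Cz + Bg * Cz + (1/(2*γ)) * (2 * C1 * ((1 + 2 * (γ/β)) * C1)),
        by positivity, ?_⟩
      intro s hs t ht
      have split : (f (xd t + x t) + g (xd t + x t) + (1/(2*γ)) * ‖xd t‖ ^ 2)
            - (f (xd s + x s) + g (xd s + x s) + (1/(2*γ)) * ‖xd s‖ ^ 2)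
          = (f (xd t + x t) - f (xd s + x s)) + ((g (xd t + x t) - g (xd s + x s))
            + ((1/(2*γ)) * ‖xd t‖ ^ 2 - (1/(2*γ)) * ‖xd s‖ ^ 2)) := by ring
      rw [split]
      have b1 := hfpiece s hs t ht
      have b2 := hgpiece s hs t ht
      have b3 := hnpiece s hs t ht
      calc |(f (xd t + x t) - f (xd s + x s)) + ((g (xd t + x t) - g (xd s + x s))
            + ((1/(2*γ)) * ‖xd t‖ ^ 2 - (1/(2*γ)) * ‖xd s‖ ^ 2))|
          ≤ |f (xd t + x t) - f (xd s + x s)| + |(g (xd t + x t) - g (xd s + x s))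
            + ((1/(2*γ)) * ‖xd t‖ ^ 2 - (1/(2*γ)) * ‖xd s‖ ^ 2)| := abs_add_le _ _
        _ ≤ |f (xd t + x t) - f (xd s + x s)| + (|g (xd t + x t) - g (xd s + x s)|
            + |(1/(2*γ)) * ‖xd t‖ ^ 2 - (1/(2*γ)) * ‖xd s‖ ^ 2|) :=
              add_le_add_right (abs_add_le _ _) _
        _ ≤ (Bv * Cz) * |t - s| + ((Bg * Cz) * |t - s|
            + ((1/(2*γ)) * (2 * C1 * ((1 + 2 * (γ/β)) * C1))) * |t - s|) :=
              add_le_add b1 (add_le_add b2 b3)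
        _ = (Bv * Cz + Bg * Cz + (1/(2*γ)) * (2 * C1 * ((1 + 2 * (γ/β)) * C1))) * |t - s| := by
              ring
    -- apply the core lemma
    apply antitone_core (E' := fun t =>
      ⟪g' (xd t + x t) - g' (x t), xdd t + xd t⟫ - (1/γ) * ‖xd t‖ ^ 2) hlip
    filter_upwards [hAE] with t hAEt
    obtain ⟨hE, hkey⟩ := hAEt
    refine ⟨hE, ?_⟩
    have h15 : (1/β) * (3 + γ/β) * ‖xd t‖ ^ 2 ≤ (1/γ) * ‖xd t‖ ^ 2 :=
      mul_le_mul_of_nonneg_right hcoeff (sq_nonneg _)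
    linarith
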